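/- Let F be the multiclass queueing operator taking an arrival process a with values in {1,…,m,∞} and service process s with values in {1,∞} to the departure process d with values in {1,…,m+1,∞}, defined via queue-lengths Q_j^{≤k} = sup_{i≤j} [#{r∈[i,j]: a(r)≤k} − #{r∈[i,j]: s(r)=1}]_+ and the rule: d(j) = ∞ iff s(j) = ∞; if s(j)=1 then d(j) ≤ k iff (Q_{j−1}^{≤k} > 0 or a(j) ≤ k), for k ≤ m, and d(j) = m+1 if s(j)=1, Q_{j−1}^{≤m}=0 and a(j)=∞. If s(i) = ∞, and b = i+1, then F(a^{(b−1,b)}, s^{(i−1,i)}) = F(a,s)^{(i−1,i)} = F(a,s). -/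

import Mathlib

open scoped Classical

/-- `QLen a s k j v`: `v` is the queue-length `Q_j^{≤k}`, i.e. the (finite, attained)
supremum over `i ≤ j` of `[#{r∈[i,j] : a(r) ≤ k} − #{r∈[i,j] : s(r)=1}]_+`. -/
def QLen (a s : ℤ → ℕ∞) (k : ℕ) (j : ℤ) (v : ℤ) : Prop :=
  IsGreatest
    {w : ℤ | ∃ i ≤ j, w = max 0
      (({r : ℤ | r ∈ Set.Icc i j ∧ a r ≤ (k : ℕ∞)}.ncard : ℤ)
        - ({r : ℤ | r ∈ Set.Icc i j ∧ s r = 1}.ncard : ℤ))} v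

/-- `isOutput m a s d`: `d` is the departure process `F_m(a,s)` of the multiclass
priority queue with arrival process `a` (classes `1,…,m` and holes `∞`) and service
process `s` (values `1` and `∞`): all queue-lengths `Q_j^{≤k}` are finite, `d(j) = ∞`
iff `s(j) = ∞`; for `1 ≤ k ≤ m`, `d(j) ≤ k` iff `s(j)=1` and (`Q_{j−1}^{≤k} > 0` or
`a(j) ≤ k`); `d(j) = m+1` when `s(j)=1`, `Q_{j−1}^{≤m} = 0` and `a(j) = ∞`; and `d`
takes values in `{1,…,m+1,∞}`. -/
def isOutput (m : ℕ) (a s d : ℤ → ℕ∞) : Prop :=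
  ∃ Q : ℤ → ℕ → ℤ,
    (∀ (j : ℤ) (k : ℕ), QLen a s k j (Q j k)) ∧
    ∀ j : ℤ,
      (d j = ⊤ ↔ s j = ⊤) ∧
      (∀ k : ℕ, 1 ≤ k → k ≤ m →
        (d j ≤ (k : ℕ∞) ↔ s j = 1 ∧ (0 < Q (j - 1) k ∨ a j ≤ (k : ℕ∞)))) ∧
      (s j = 1 ∧ Q (j - 1) m = 0 ∧ a j = ⊤ → d j = ((m + 1 : ℕ) : ℕ∞)) ∧
      (d j = ⊤ ∨ ((1 : ℕ∞) ≤ d j ∧ d j ≤ ((m + 1 : ℕ) : ℕ∞)))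

/-- The TASEP swap `u^{(i−1,i)}`: put `min(u(i−1),u(i))` at `i−1` and the max at `i`
(`∞ = ⊤` is larger than every integer). -/
noncomputable def swapPair (u : ℤ → ℕ∞) (i : ℤ) : ℤ → ℕ∞ :=
  fun j => if j = i - 1 then min (u (i - 1)) (u i)
           else if j = i then max (u (i - 1)) (u i)
           else u j

noncomputable def cnt (P : ℤ → Prop) (i j : ℤ) : ℤ :=
  (((Finset.Icc i j).filter P).card : ℤ)


noncomputable def trm (a s : ℤ → ℕ∞) (k : ℕ) (i j : ℤ) : ℤ :=
  max 0 (cnt (fun r => a r ≤ (k : ℕ∞)) i j - cnt (fun r => s r = 1) i j)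

lemma ncard_eq (P : ℤ → Prop) (i j : ℤ) :
    ({r : ℤ | r ∈ Set.Icc i j ∧ P r}.ncard : ℤ) = cnt P i j := by
  have : {r : ℤ | r ∈ Set.Icc i j ∧ P r} = ↑((Finset.Icc i j).filter P) := by
    ext r
    simp [Set.mem_Icc, Finset.mem_Icc]
  rw [this, Set.ncard_coe_finset]
  rfl

lemma qlen_iff (a s : ℤ → ℕ∞) (k : ℕ) (j : ℤ) (v : ℤ) :
    QLen a s k j v ↔ IsGreatest {w : ℤ | ∃ i ≤ j, w = trm a s k i j} v := by
  unfold QLen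
  have : {w : ℤ | ∃ i ≤ j, w = max 0
      (({r : ℤ | r ∈ Set.Icc i j ∧ a r ≤ (k : ℕ∞)}.ncard : ℤ)
        - ({r : ℤ | r ∈ Set.Icc i j ∧ s r = 1}.ncard : ℤ))}
      = {w : ℤ | ∃ i ≤ j, w = trm a s k i j} := by
    ext w
    simp only [Set.mem_setOf_eq, trm, ncard_eq]
  rw [this]

lemma qlen_mem (a s : ℤ → ℕ∞) (k : ℕ) (j : ℤ) (v : ℤ) (h : QLen a s k j v) :
    ∃ i ≤ j, v = trm a s k i j := ((qlen_iff a s k j v).1 h).1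

lemma qlen_ub (a s : ℤ → ℕ∞) (k : ℕ) (j : ℤ) (v : ℤ) (h : QLen a s k j v)
    (i : ℤ) (hi : i ≤ j) : trm a s k i j ≤ v :=
  ((qlen_iff a s k j v).1 h).2 ⟨i, hi, rfl⟩

lemma trm_nonneg (a s : ℤ → ℕ∞) (k : ℕ) (i j : ℤ) : 0 ≤ trm a s k i j := le_max_left _ _

lemma qlen_nonneg (a s : ℤ → ℕ∞) (k : ℕ) (j : ℤ) (v : ℤ) (h : QLen a s k j v) : 0 ≤ v :=
  le_trans (trm_nonneg a s k j j) (qlen_ub a s k j v h j le_rfl)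

lemma qlen_unique {a s : ℤ → ℕ∞} {k : ℕ} {j : ℤ} {v w : ℤ}
    (h1 : QLen a s k j v) (h2 : QLen a s k j w) : v = w :=
  IsGreatest.unique h1 h2

lemma greatest_eq {S T : Set ℤ} {v w : ℤ} (hS : IsGreatest S v) (hT : IsGreatest T w)
    (h1 : ∀ x ∈ S, ∃ y ∈ T, x ≤ y) (h2 : ∀ y ∈ T, ∃ x ∈ S, y ≤ x) : v = w := by
  obtain ⟨y, hy, hvy⟩ := h1 v hS.1
  obtain ⟨x, hx, hwx⟩ := h2 w hT.1
  exact le_antisymm (le_trans hvy (hT.2 hy)) (le_trans hwx (hS.2 hx))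
lemma cnt_nonneg (P : ℤ → Prop) (i j : ℤ) : 0 ≤ cnt P i j := Int.ofNat_nonneg _

lemma cnt_congr (P Q : ℤ → Prop) (i j : ℤ) (h : ∀ r, i ≤ r → r ≤ j → (P r ↔ Q r)) :
    cnt P i j = cnt Q i j := by
  unfold cnt
  congr 2
  apply Finset.filter_congr
  intro x hx
  simp only [Finset.mem_Icc] at hx
  simp [h x hx.1 hx.2]

lemma cnt_split (P : ℤ → Prop) (i t j : ℤ) (h1 : i ≤ t) (h2 : t ≤ j + 1) :
    cnt P i j = cnt P i (t-1) + cnt P t j := by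
  unfold cnt
  rw [← Nat.cast_add]
  congr 1
  rw [← Finset.card_union_of_disjoint, ← Finset.filter_union]
  · congr 2
    ext x
    simp only [Finset.mem_union, Finset.mem_Icc]
    omega
  · apply Finset.disjoint_filter_filter
    rw [Finset.disjoint_left]
    intro x hx hx'
    simp only [Finset.mem_Icc] at hx hx'
    omega

lemma cnt_single (P : ℤ → Prop) (j : ℤ) : cnt P j j = if P j then 1 else 0 := by
  unfold cnt
  rw [Finset.Icc_self, Finset.filter_singleton]
  split <;> simp

lemma cnt_mono (P Q : ℤ → Prop) (i j : ℤ) (h : ∀ r, i ≤ r → r ≤ j → P r → Q r) :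
    cnt P i j ≤ cnt Q i j := by
  unfold cnt
  have : (Finset.Icc i j).filter P ⊆ (Finset.Icc i j).filter Q := by
    intro x hx
    simp only [Finset.mem_filter, Finset.mem_Icc] at hx ⊢
    exact ⟨hx.1, h x hx.1.1 hx.1.2 hx.2⟩
  exact_mod_cast Finset.card_le_card this
lemma qlen_step (a s : ℤ → ℕ∞) (k : ℕ) (j : ℤ) (v : ℤ) (hj : s j ≠ 1)
    (h : QLen a s k (j-1) v) :
    QLen a s k j (v + (if a j ≤ (k : ℕ∞) then 1 else 0)) := by
  have hv0 : 0 ≤ v := qlen_nonneg _ _ _ _ _ h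
  have hcntA : ∀ i : ℤ, i ≤ j - 1 →
      cnt (fun r => a r ≤ (k : ℕ∞)) i j
        = cnt (fun r => a r ≤ (k : ℕ∞)) i (j-1) + (if a j ≤ (k : ℕ∞) then 1 else 0) := by
    intro i hi
    rw [cnt_split _ i j j (by omega) (by omega), cnt_single]
    split_ifs <;> omega
  have hcntS : ∀ i : ℤ, i ≤ j - 1 →
      cnt (fun r => s r = 1) i j = cnt (fun r => s r = 1) i (j-1) := by
    intro i hi
    rw [cnt_split _ i j j (by omega) (by omega), cnt_single, if_neg hj, add_zero]
  rw [qlen_iff]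
  constructor
  · rcases eq_or_lt_of_le hv0 with hv | hv
    · refine ⟨j, le_rfl, ?_⟩
      rw [trm, cnt_single, cnt_single, if_neg hj]
      split_ifs <;> omega
    · obtain ⟨i0, hi0, hv0'⟩ := qlen_mem _ _ _ _ _ h
      refine ⟨i0, by omega, ?_⟩
      rw [trm] at hv0' ⊢
      rw [hcntA i0 hi0, hcntS i0 hi0]
      split_ifs at * <;> omega
  · rintro x ⟨i1, hi1, rfl⟩
    rcases eq_or_lt_of_le hi1 with h1 | h1
    · rw [h1, trm, cnt_single, cnt_single, if_neg hj]
      split_ifs <;> omega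
    · have hi1' : i1 ≤ j - 1 := by omega
      have := qlen_ub _ _ _ _ _ h i1 hi1'
      rw [trm] at this ⊢
      rw [hcntA i1 hi1', hcntS i1 hi1']
      split_ifs <;> omega

lemma swapPair_left (u : ℤ → ℕ∞) (i : ℤ) : swapPair u (i+1) i = min (u i) (u (i+1)) := by
  unfold swapPair
  rw [if_pos (by omega)]
  norm_num

lemma swapPair_right (u : ℤ → ℕ∞) (i : ℤ) : swapPair u (i+1) (i+1) = max (u i) (u (i+1)) := by
  unfold swapPair
  rw [if_neg (by omega), if_pos rfl]
  norm_num

lemma swapPair_other (u : ℤ → ℕ∞) (i r : ℤ) (h1 : r ≠ i) (h2 : r ≠ i + 1) :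
    swapPair u (i+1) r = u r := by
  unfold swapPair
  rw [if_neg (by omega), if_neg (by omega)]

lemma swap_s (s : ℤ → ℕ∞) (i : ℤ) (hsi : s i = ⊤) : swapPair s i = s := by
  funext j
  unfold swapPair
  split_ifs with h1 h2
  · rw [h1, hsi, min_eq_left le_top]
  · rw [h2, hsi, max_eq_right le_top]
  · rfl

lemma ind_minmax (x y : ℕ∞) (k : ℕ∞) :
    (if min x y ≤ k then (1:ℤ) else 0) + (if max x y ≤ k then 1 else 0)
      = (if x ≤ k then 1 else 0) + (if y ≤ k then 1 else 0) := by
  rcases le_total x y with h | h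
  · rw [min_eq_left h, max_eq_right h]
  · rw [min_eq_right h, max_eq_left h, add_comm]
lemma trm_congr (a a' s : ℤ → ℕ∞) (k : ℕ) (i j : ℤ)
    (h : ∀ r, i ≤ r → r ≤ j → a' r = a r) : trm a' s k i j = trm a s k i j := by
  unfold trm
  rw [cnt_congr (fun r => a' r ≤ (k:ℕ∞)) (fun r => a r ≤ (k:ℕ∞)) i j
    (fun r h1 h2 => by simp only [h r h1 h2])]

lemma qlen_left (a s : ℤ → ℕ∞) (k : ℕ) (i j : ℤ) (hj : j ≤ i - 1) (v : ℤ) :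
    QLen (swapPair a (i+1)) s k j v ↔ QLen a s k j v := by
  rw [qlen_iff, qlen_iff]
  have : {w : ℤ | ∃ i' ≤ j, w = trm (swapPair a (i+1)) s k i' j}
      = {w : ℤ | ∃ i' ≤ j, w = trm a s k i' j} := by
    ext w
    constructor <;> rintro ⟨i', hi', rfl⟩ <;> refine ⟨i', hi', ?_⟩
    · exact trm_congr a _ s k i' j (fun r h1 h2 =>
        swapPair_other a i r (by omega) (by omega))
    · exact (trm_congr a _ s k i' j (fun r h1 h2 =>
        swapPair_other a i r (by omega) (by omega))).symm
  rw [this]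

lemma cnt_pair (P : ℤ → Prop) (i : ℤ) :
    cnt P i (i+1) = (if P i then 1 else 0) + (if P (i+1) then 1 else 0) := by
  rw [cnt_split P i (i+1) (i+1) (by omega) (by omega)]
  norm_num [cnt_single]

/-- counting swapped arrivals over an interval containing both `i` and `i+1`. -/
lemma cnt_swap_both (a : ℤ → ℕ∞) (k : ℕ) (i i' j : ℤ) (h1 : i' ≤ i) (h2 : i + 1 ≤ j) :
    cnt (fun r => swapPair a (i+1) r ≤ (k:ℕ∞)) i' j = cnt (fun r => a r ≤ (k:ℕ∞)) i' j := by
  have split2 : ∀ b : ℤ → ℕ∞,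
      cnt (fun r => b r ≤ (k:ℕ∞)) i' j
        = cnt (fun r => b r ≤ (k:ℕ∞)) i' (i-1) + cnt (fun r => b r ≤ (k:ℕ∞)) i (i+1)
          + cnt (fun r => b r ≤ (k:ℕ∞)) (i+2) j := by
    intro b
    rw [cnt_split (fun r => b r ≤ (k:ℕ∞)) i' i j (by omega) (by omega),
      cnt_split (fun r => b r ≤ (k:ℕ∞)) i (i+2) j (by omega) (by omega)]
    have e1 : i + 2 - 1 = i + 1 := by ring
    rw [e1]
    omega
  rw [split2, split2]
  congr 1
  · congr 1
    · exact cnt_congr _ _ _ _ (fun r hr1 hr2 => by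
        rw [swapPair_other a i r (by omega) (by omega)])
    · rw [cnt_pair, cnt_pair, swapPair_left, swapPair_right]
      have := ind_minmax (a i) (a (i+1)) ((k:ℕ∞))
      split_ifs at this ⊢ <;> omega
  · exact cnt_congr _ _ _ _ (fun r hr1 hr2 => by
      rw [swapPair_other a i r (by omega) (by omega)])
lemma qlen_swap (a s : ℤ → ℕ∞) (k : ℕ) (i j : ℤ) (hsi : s i = ⊤) (hj : i + 1 ≤ j)
    {v w : ℤ} (hv : QLen (swapPair a (i+1)) s k j v) (hw : QLen a s k j w) : v = w := by
  have hsi1 : s i ≠ 1 := by rw [hsi]; simp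
  have hEq : ∀ i', i' ≤ i → trm (swapPair a (i+1)) s k i' j = trm a s k i' j := by
    intro i' h
    unfold trm
    rw [cnt_swap_both a k i i' j h hj]
  have hEq2 : ∀ i', i + 2 ≤ i' → trm (swapPair a (i+1)) s k i' j = trm a s k i' j := by
    intro i' h
    exact trm_congr a _ s k i' j (fun r h1 h2 =>
      swapPair_other a i r (by omega) (by omega))
  have hLe1 : trm (swapPair a (i+1)) s k (i+1) j ≤ trm a s k (i+1) j := by
    have hm : cnt (fun r => swapPair a (i+1) r ≤ (k:ℕ∞)) (i+1) j
        ≤ cnt (fun r => a r ≤ (k:ℕ∞)) (i+1) j := by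
      apply cnt_mono
      intro r h1 h2 hle
      rcases eq_or_lt_of_le h1 with h3 | h3
      · rw [← h3] at hle ⊢
        rw [swapPair_right] at hle
        exact le_trans (le_max_right _ _) hle
      · rwa [swapPair_other a i r (by omega) (by omega)] at hle
    unfold trm
    exact max_le_max le_rfl (by omega)
  have hLe2 : trm a s k (i+1) j ≤ trm (swapPair a (i+1)) s k i j := by
    have e1 : i + 1 - 1 = i := by ring
    have e2 : i + 2 - 1 = i + 1 := by ring
    have splitA' : cnt (fun r => swapPair a (i+1) r ≤ (k:ℕ∞)) i j
        = (if min (a i) (a (i+1)) ≤ (k:ℕ∞) then 1 else 0)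
          + (if max (a i) (a (i+1)) ≤ (k:ℕ∞) then 1 else 0)
          + cnt (fun r => a r ≤ (k:ℕ∞)) (i+2) j := by
      rw [cnt_split _ i (i+1) j (by omega) (by omega), e1,
        cnt_split _ (i+1) (i+2) j (by omega) (by omega), e2,
        cnt_single, cnt_single, swapPair_left, swapPair_right,
        cnt_congr (fun r => swapPair a (i+1) r ≤ (k:ℕ∞)) (fun r => a r ≤ (k:ℕ∞)) (i+2) j
          (fun r h1 h2 => by simp only [swapPair_other a i r (by omega) (by omega)])]
      split_ifs <;> omega
    have splitA : cnt (fun r => a r ≤ (k:ℕ∞)) (i+1) j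
        = (if a (i+1) ≤ (k:ℕ∞) then 1 else 0) + cnt (fun r => a r ≤ (k:ℕ∞)) (i+2) j := by
      rw [cnt_split _ (i+1) (i+2) j (by omega) (by omega), e2, cnt_single]
      split_ifs <;> omega
    have splitS : cnt (fun r => s r = 1) i j = cnt (fun r => s r = 1) (i+1) j := by
      rw [cnt_split _ i (i+1) j (by omega) (by omega), e1, cnt_single, if_neg hsi1]
      omega
    have hxy : cnt (fun r => a r ≤ (k:ℕ∞)) (i+1) j - cnt (fun r => s r = 1) (i+1) j
        ≤ cnt (fun r => swapPair a (i+1) r ≤ (k:ℕ∞)) i j - cnt (fun r => s r = 1) i j := by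
      rw [splitA', splitA, splitS]
      by_cases h : a (i+1) ≤ (k:ℕ∞)
      · have h2 : a i ⊓ a (i+1) ≤ (k:ℕ∞) := min_le_of_right_le h
        simp only [if_pos h, if_pos h2]
        split_ifs <;> omega
      · simp only [if_neg h]
        split_ifs <;> omega
    unfold trm
    exact max_le_max le_rfl hxy
  rw [qlen_iff] at hv hw
  apply greatest_eq hv hw
  · rintro x ⟨i', hi', rfl⟩
    rcases (by omega : i' ≤ i ∨ i' = i + 1 ∨ i + 2 ≤ i') with h | h | h
    · exact ⟨trm a s k i' j, ⟨i', hi', rfl⟩, le_of_eq (hEq i' h)⟩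
    · subst h
      exact ⟨trm a s k (i+1) j, ⟨i+1, hj, rfl⟩, hLe1⟩
    · exact ⟨trm a s k i' j, ⟨i', hi', rfl⟩, le_of_eq (hEq2 i' h)⟩
  · rintro y ⟨i', hi', rfl⟩
    rcases (by omega : i' ≤ i ∨ i' = i + 1 ∨ i + 2 ≤ i') with h | h | h
    · exact ⟨trm (swapPair a (i+1)) s k i' j, ⟨i', hi', rfl⟩, le_of_eq (hEq i' h).symm⟩
    · subst h
      exact ⟨trm (swapPair a (i+1)) s k i j, ⟨i, by omega, rfl⟩, hLe2⟩
    · exact ⟨trm (swapPair a (i+1)) s k i' j, ⟨i', hi', rfl⟩, le_of_eq (hEq2 i' h).symm⟩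
lemma out_le (m : ℕ) (x y : ℕ∞) (hx : x ≠ ⊤) (hy : y ≠ ⊤)
    (hy1 : (1:ℕ∞) ≤ y) (hym : y ≤ ((m+1 : ℕ) : ℕ∞))
    (hxm : x ≤ ((m+1 : ℕ) : ℕ∞))
    (h : ∀ k : ℕ, 1 ≤ k → k ≤ m → (y ≤ (k:ℕ∞) → x ≤ (k:ℕ∞))) : x ≤ y := by
  lift y to ℕ using hy with p
  rcases le_or_gt p m with hpm | hpm
  · have h1p : 1 ≤ p := by exact_mod_cast hy1
    exact h p h1p hpm (by norm_cast)
  · have hp : p = m + 1 := by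
      have : p ≤ m + 1 := by exact_mod_cast hym
      omega
    rw [hp]
    exact_mod_cast hxm

/-- Lemma 4.3, Case 1: if `s(i) = ∞` then, with `b = i+1`,
`F_m(a^{(b−1,b)}, s^{(i−1,i)}) = F_m(a,s)^{(i−1,i)} = F_m(a,s)`. -/
theorem stmt_9 (m : ℕ) (a s d : ℤ → ℕ∞)
    (ha : ∀ j, a j = ⊤ ∨ ((1 : ℕ∞) ≤ a j ∧ a j ≤ ((m : ℕ) : ℕ∞)))
    (hs : ∀ j, s j = 1 ∨ s j = ⊤)
    (hd : isOutput m a s d)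
    (i : ℤ) (hsi : s i = ⊤) :
    (∀ d' : ℤ → ℕ∞,
        isOutput m (swapPair a (i + 1)) (swapPair s i) d' → d' = swapPair d i)
    ∧ swapPair d i = d := by
  obtain ⟨Q, hQ, hR⟩ := hd
  have hditop : d i = ⊤ := (hR i).1.mpr hsi
  have hswap_d : swapPair d i = d := swap_s d i hditop
  have hsine : s i ≠ 1 := by rw [hsi]; simp
  constructor
  · intro d' hd'
    rw [swap_s s i hsi] at hd'
    obtain ⟨Q', hQ', hR'⟩ := hd'
    rw [hswap_d]
    funext j
    rcases hs j with hj1 | hjT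
    · -- s j = 1
      have hji : j ≠ i := by
        intro h
        rw [h, hsi] at hj1
        simp at hj1
      have key : ∀ k : ℕ, 1 ≤ k → k ≤ m →
          ((0 < Q' (j-1) k ∨ swapPair a (i+1) j ≤ (k:ℕ∞))
            ↔ (0 < Q (j-1) k ∨ a j ≤ (k:ℕ∞))) := by
        intro k hk1 hkm
        rcases (by omega : j ≤ i - 1 ∨ j = i + 1 ∨ i + 2 ≤ j) with hc | hc | hc
        · have hQeq : Q' (j-1) k = Q (j-1) k :=
            qlen_unique ((qlen_left a s k i (j-1) (by omega) _).1 (hQ' (j-1) k)) (hQ (j-1) k)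
          rw [hQeq, swapPair_other a i j (by omega) (by omega)]
        · subst hc
          have e : i + 1 - 1 = i := by ring
          rw [e, swapPair_right]
          have hQbase : Q' (i-1) k = Q (i-1) k :=
            qlen_unique ((qlen_left a s k i (i-1) (by omega) _).1 (hQ' (i-1) k)) (hQ (i-1) k)
          have hQi : Q i k = Q (i-1) k + (if a i ≤ (k:ℕ∞) then 1 else 0) := by
            have hstep := qlen_step a s k i (Q (i-1) k) hsine (hQ (i-1) k)
            exact qlen_unique (hQ i k) hstep
          have hQ'i : Q' i k
              = Q' (i-1) k + (if min (a i) (a (i+1)) ≤ (k:ℕ∞) then 1 else 0) := by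
            have hstep := qlen_step (swapPair a (i+1)) s k i (Q' (i-1) k) hsine (hQ' (i-1) k)
            rw [swapPair_left] at hstep
            exact qlen_unique (hQ' i k) hstep
          have hq0 : 0 ≤ Q (i-1) k := qlen_nonneg _ _ _ _ _ (hQ (i-1) k)
          rw [hQi, hQ'i, hQbase]
          by_cases h1 : a i ≤ (k:ℕ∞) <;> by_cases h2 : a (i+1) ≤ (k:ℕ∞) <;>
            simp [min_le_iff, max_le_iff, h1, h2] <;> omega
        · have hQeq : Q' (j-1) k = Q (j-1) k :=
            qlen_swap a s k i (j-1) hsi (by omega) (hQ' (j-1) k) (hQ (j-1) k)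
          rw [hQeq, swapPair_other a i j (by omega) (by omega)]
      have hsjne : s j ≠ ⊤ := by rw [hj1]; simp
      have hdne : d j ≠ ⊤ := fun h => hsjne ((hR j).1.mp h)
      have hd'ne : d' j ≠ ⊤ := fun h => hsjne ((hR' j).1.mp h)
      have hdrange := (hR j).2.2.2.resolve_left hdne
      have hd'range := (hR' j).2.2.2.resolve_left hd'ne
      have hiff : ∀ k : ℕ, 1 ≤ k → k ≤ m → (d' j ≤ (k:ℕ∞) ↔ d j ≤ (k:ℕ∞)) := by
        intro k hk1 hkm
        rw [(hR' j).2.1 k hk1 hkm, (hR j).2.1 k hk1 hkm]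
        exact and_congr_right (fun _ => key k hk1 hkm)
      exact le_antisymm
        (out_le m (d' j) (d j) hd'ne hdne hdrange.1 hdrange.2 hd'range.2
          (fun k hk1 hkm => (hiff k hk1 hkm).mpr))
        (out_le m (d j) (d' j) hdne hd'ne hd'range.1 hd'range.2 hdrange.2
          (fun k hk1 hkm => (hiff k hk1 hkm).mp))
    · -- s j = ⊤
      rw [(hR' j).1.mpr hjT, (hR j).1.mpr hjT]
  · exact hswap_d
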